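/- arXiv:2310.07923 — 2 statements merged into one kernel-verified Lean document; each statement's English description precedes it below -/
import Mathlib

section
/- For all real numbers q and k, the Euclidean inner product satisfies φ(q, 1) · φ(k, 1) ≤ 1, and the inequality is strict whenever q ≠ k; hence over all k, the inner product φ(q, 1) · φ(k, 1) is uniquely maximized (with value 1) at k = q. -/
open scoped RealInnerProductSpace

/-- Layer norm: subtract the mean, then normalize to unit Euclidean norm. -/
noncomputable def layerNorm {ι : Type*} [Fintype ι] (v : EuclideanSpace ℝ ι) :
    EuclideanSpace ℝ ι :=
  let c : EuclideanSpace ℝ ι := WithLp.toLp 2 (fun j => v j - (∑ l, v l) / (Fintype.card ι))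
  ‖c‖⁻¹ • c

/-- The layer-norm hash φ(x, y) = layer_norm(⟨x, y, −x, −y⟩) ∈ ℝ⁴. -/
noncomputable def lnHash (x y : ℝ) : EuclideanSpace ℝ (Fin 4) :=
  layerNorm (WithLp.toLp 2 ![x, y, -x, -y] : EuclideanSpace ℝ (Fin 4))

lemma lnHash_eq (x : ℝ) :
    lnHash x 1 = (Real.sqrt (2*x^2+2))⁻¹ • (WithLp.toLp 2 ![x, 1, -x, -1] : EuclideanSpace ℝ (Fin 4)) := by
  unfold lnHash layerNorm
  have hsum : (∑ l, (WithLp.toLp 2 ![x, 1, -x, -1] : EuclideanSpace ℝ (Fin 4)) l) = 0 := by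
    simp [Fin.sum_univ_four]
  have hc : (WithLp.toLp 2 (fun j => (WithLp.toLp 2 ![x, 1, -x, -1] : EuclideanSpace ℝ (Fin 4)) j
      - (∑ l, (WithLp.toLp 2 ![x, 1, -x, -1] : EuclideanSpace ℝ (Fin 4)) l) / (Fintype.card (Fin 4))) : EuclideanSpace ℝ (Fin 4))
      = (WithLp.toLp 2 ![x, 1, -x, -1] : EuclideanSpace ℝ (Fin 4)) := by
    congr 1; funext j; rw [hsum]; simp
  simp only [hc]
  congr 1
  rw [EuclideanSpace.norm_eq]
  congr 1
  simp [Fin.sum_univ_four]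
  ring_nf

lemma lnHash_inner (x y : ℝ) :
    ⟪lnHash x 1, lnHash y 1⟫ =
      (Real.sqrt (2*x^2+2))⁻¹ * (Real.sqrt (2*y^2+2))⁻¹ * (2*x*y+2) := by
  rw [lnHash_eq, lnHash_eq, real_inner_smul_left, real_inner_smul_right,
    PiLp.inner_apply]
  simp [Fin.sum_univ_four]
  ring

/-- φ(q,1) · φ(k,1) ≤ 1, with strict inequality whenever q ≠ k; the inner product is
uniquely maximized (with value 1) at k = q. -/
theorem lnHash_inner_le_one_and_unique_max (q k : ℝ) :
    ⟪lnHash q 1, lnHash k 1⟫ ≤ 1 ∧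
      (q ≠ k → ⟪lnHash q 1, lnHash k 1⟫ < 1) ∧
      ⟪lnHash q 1, lnHash q 1⟫ = 1 := by
  have hq : (0:ℝ) < 2*q^2+2 := by positivity
  have hk : (0:ℝ) < 2*k^2+2 := by positivity
  set a := Real.sqrt (2*q^2+2) with ha
  set b := Real.sqrt (2*k^2+2) with hb
  have hap : 0 < a := Real.sqrt_pos.mpr hq
  have hbp : 0 < b := Real.sqrt_pos.mpr hk
  have ha2 : a^2 = 2*q^2+2 := Real.sq_sqrt hq.le
  have hb2 : b^2 = 2*k^2+2 := Real.sq_sqrt hk.le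
  have habsq : (2*q*k+2)^2 ≤ (a*b)^2 := by nlinarith [sq_nonneg (q-k)]
  have hab : 2*q*k+2 ≤ a*b :=
    le_of_pow_le_pow_left₀ two_ne_zero (by positivity) habsq
  refine ⟨?_, ?_, ?_⟩
  · rw [lnHash_inner]
    rw [← ha, ← hb]
    rw [inv_mul_eq_div, div_mul_eq_mul_div, div_le_one (by positivity)]
    calc b⁻¹ * (2*q*k+2) ≤ b⁻¹ * (a*b) := by
          exact mul_le_mul_of_nonneg_left hab (by positivity)
      _ = a := by field_simp
  · intro hqk
    have habsq' : (2*q*k+2)^2 < (a*b)^2 := by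
      have hne : q - k ≠ 0 := sub_ne_zero.mpr hqk
      have : 0 < (q-k)^2 := by positivity
      nlinarith
    have hab' : 2*q*k+2 < a*b := lt_of_pow_lt_pow_left₀ 2 (by positivity) habsq'
    rw [lnHash_inner, ← ha, ← hb]
    rw [inv_mul_eq_div, div_mul_eq_mul_div, div_lt_one (by positivity)]
    calc b⁻¹ * (2*q*k+2) < b⁻¹ * (a*b) :=
          mul_lt_mul_of_pos_left hab' (by positivity)
      _ = a := by field_simp
  · rw [lnHash_inner, ← ha]
    have : 2*q*q+2 = a^2 := by rw [ha2]; ring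
    rw [this]
    field_simp
end

section
/- For every real number i, the square of the Euclidean inner product of adjacent layer-norm hashes satisfies (φ(i, 1) · φ(i − 1, 1))² = 1 − 1/(i⁴ − 2i³ + 3i² − 2i + 2), where the denominator i⁴ − 2i³ + 3i² − 2i + 2 = (i(i−1) + 1)² + 1 is always positive. -/
open scoped RealInnerProductSpace

def vvec (x : ℝ) : EuclideanSpace ℝ (Fin 4) := WithLp.toLp 2 ![x, 1, -x, -1]

lemma lnHash_eq_s9 (x : ℝ) : lnHash x 1 = ‖vvec x‖⁻¹ • vvec x := by
  unfold lnHash layerNorm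
  have hs : (∑ l, (WithLp.toLp 2 ![x, 1, -x, -1] : EuclideanSpace ℝ (Fin 4)) l) = 0 := by
    simp [Fin.sum_univ_four]
  have hc : WithLp.toLp 2 (fun j => (WithLp.toLp 2 ![x, 1, -x, -1] : EuclideanSpace ℝ (Fin 4)) j -
      (∑ l, (WithLp.toLp 2 ![x, 1, -x, -1] : EuclideanSpace ℝ (Fin 4)) l) / (Fintype.card (Fin 4)))
      = vvec x := by
    ext j; rw [hs]; simp [vvec]
  simp only [hc]

lemma inner_vec (x y : ℝ) : ⟪vvec x, vvec y⟫ = 2*x*y + 2 := by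
  simp [vvec, PiLp.inner_apply, Fin.sum_univ_four]
  ring

lemma normsq_vec (x : ℝ) : ‖vvec x‖ ^ 2 = 2*x^2 + 2 := by
  rw [← real_inner_self_eq_norm_sq, inner_vec]; ring

/-- (φ(i,1) · φ(i−1,1))² = 1 − 1/(i⁴ − 2i³ + 3i² − 2i + 2), with the denominator
equal to (i(i−1) + 1)² + 1 and always positive. -/
theorem lnHash_adjacent_inner_sq (i : ℝ) :
    ⟪lnHash i 1, lnHash (i - 1) 1⟫ ^ 2 =
        1 - 1 / (i ^ 4 - 2 * i ^ 3 + 3 * i ^ 2 - 2 * i + 2) ∧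
      i ^ 4 - 2 * i ^ 3 + 3 * i ^ 2 - 2 * i + 2 = (i * (i - 1) + 1) ^ 2 + 1 ∧
      0 < i ^ 4 - 2 * i ^ 3 + 3 * i ^ 2 - 2 * i + 2 := by
  have hD : i ^ 4 - 2 * i ^ 3 + 3 * i ^ 2 - 2 * i + 2 = (i * (i - 1) + 1) ^ 2 + 1 := by ring
  have hpos : 0 < i ^ 4 - 2 * i ^ 3 + 3 * i ^ 2 - 2 * i + 2 := by rw [hD]; positivity
  refine ⟨?_, hD, hpos⟩
  have key : ⟪lnHash i 1, lnHash (i - 1) 1⟫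
      = ‖vvec i‖⁻¹ * (‖vvec (i - 1)‖⁻¹ * (2 * i * (i - 1) + 2)) := by
    rw [lnHash_eq_s9, lnHash_eq_s9, real_inner_smul_left, real_inner_smul_right, inner_vec]
  have h1 := normsq_vec i
  have h2 := normsq_vec (i - 1)
  have e1 : (0:ℝ) < 2 * i ^ 2 + 2 := by positivity
  have e2 : (0:ℝ) < 2 * (i - 1) ^ 2 + 2 := by positivity
  rw [key]
  rw [mul_pow, mul_pow, inv_pow, inv_pow, h1, h2]
  have hne := hpos.ne'
  rw [← mul_assoc, ← mul_inv,
    show (2 * i ^ 2 + 2) * (2 * (i - 1) ^ 2 + 2) = 4 * (i ^ 4 - 2 * i ^ 3 + 3 * i ^ 2 - 2 * i + 2) by ring,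
    show (2 * i * (i - 1) + 2) ^ 2 = 4 * (i ^ 4 - 2 * i ^ 3 + 3 * i ^ 2 - 2 * i + 2) - 4 by ring,
    inv_mul_eq_div, eq_sub_iff_add_eq, div_add_div _ _ (mul_ne_zero four_ne_zero hne) hne,
    div_eq_one_iff_eq (mul_ne_zero (mul_ne_zero four_ne_zero hne) hne)]
  ring
end
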